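/- Let X have a log-concave distribution on ℕ₀ with strictly positive probabilities p_j, whose probability generating function f is entire with lim_{r→∞} ln f(r)/(ln r)² = β ∈ (0,∞). If a > exp(1/(2β)), then there exists C > 0 with p_j ≥ C a^{-j(j-1)/2} for all j, and hence the distribution of Y = a^X admits a perturbation (Stieltjes class) and is moment-indeterminate. -/

import Mathlib

open Filter Finset

lemma tri_succ (n : ℕ) : (n+1) * ((n+1) - 1) / 2 = n * (n - 1) / 2 + n := by
  cases n with
  | zero => rfl
  | succ m =>
    simp only [Nat.add_sub_cancel]
    obtain ⟨k, hk⟩ := Nat.even_mul_succ_self m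
    have h1 : (m+1+1) * (m+1) = m*(m+1) + 2*(m+1) := by ring
    have h3 : (m+1) * m = m*(m+1) := by ring
    omega

lemma one_sub_ge_exp {t : ℝ} (h0 : 0 ≤ t) (h1 : t < 1) :
    Real.exp (-(t/(1-t))) ≤ 1 - t := by
  have hpos : 0 < 1 - t := by linarith
  have he := Real.exp_pos (t/(1-t))
  have hcancel : (1-t) * (t/(1-t)) = t := by field_simp
  have h3 : 1 ≤ (1-t) * Real.exp (t/(1-t)) := by
    nlinarith [mul_le_mul_of_nonneg_left (Real.add_one_le_exp (t/(1-t))) hpos.le]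
  rw [Real.exp_neg, inv_eq_one_div, div_le_iff₀ he]
  linarith [h3]

noncomputable def cseq (q : ℝ) : ℕ → ℝ
  | 0 => 1
  | j+1 => -(q^j / (1 - q^(j+1))) * cseq q j

lemma cseq_prod {q : ℝ} (hq0 : 0 < q) (hq1 : q < 1) (j : ℕ) :
    |cseq q j| * ∏ i ∈ Finset.range j, (1 - q^(i+1)) = q ^ (j*(j-1)/2) := by
  induction j with
  | zero => simp [cseq]
  | succ j ih =>
    have hqj : q^(j+1) < 1 := pow_lt_one₀ hq0.le hq1 (by omega)
    have hpos : 0 < 1 - q^(j+1) := by linarith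
    have habs : |cseq q (j+1)| = (q^j / (1 - q^(j+1))) * |cseq q j| := by
      rw [show cseq q (j+1) = -(q^j / (1 - q^(j+1))) * cseq q j from rfl]
      rw [abs_mul, abs_neg, abs_of_nonneg (by positivity)]
    rw [Finset.prod_range_succ, habs, tri_succ]
    conv_rhs => rw [pow_add]
    rw [← ih]
    field_simp

lemma prod_lb {q : ℝ} (hq0 : 0 < q) (hq1 : q < 1) (j : ℕ) :
    Real.exp (-(q/(1-q)^2)) ≤ ∏ i ∈ Finset.range j, (1 - q^(i+1)) := by
  have hq' : 0 < 1 - q := by linarith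
  have step1 : ∏ i ∈ Finset.range j, Real.exp (-(q^(i+1)/(1-q)))
      ≤ ∏ i ∈ Finset.range j, (1 - q^(i+1)) := by
    apply Finset.prod_le_prod
    · intro i _; exact (Real.exp_pos _).le
    · intro i _
      have h1 : q^(i+1) < 1 := pow_lt_one₀ hq0.le hq1 (by omega)
      have h0 : 0 ≤ q^(i+1) := by positivity
      have hle : q^(i+1) ≤ q := by
        have : q^(i+1) ≤ q^1 := pow_le_pow_of_le_one hq0.le hq1.le (by omega)
        simpa using this
      calc Real.exp (-(q^(i+1)/(1-q))) ≤ Real.exp (-(q^(i+1)/(1-q^(i+1)))) := by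
            apply Real.exp_le_exp.2
            rw [neg_le_neg_iff]
            gcongr <;> linarith
        _ ≤ 1 - q^(i+1) := one_sub_ge_exp h0 h1
  refine le_trans ?_ step1
  rw [← Real.exp_sum]
  apply Real.exp_le_exp.2
  have h1 : ∑ x ∈ Finset.range j, q^(x+1) ≤ q * (1-q)⁻¹ := by
    have hg : ∑ x ∈ Finset.range j, q^x ≤ (1-q)⁻¹ := by
      have := Summable.sum_le_tsum (Finset.range j) (fun i _ => by positivity)
        (summable_geometric_of_lt_one hq0.le hq1)
      rwa [tsum_geometric_of_lt_one hq0.le hq1] at this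
    calc ∑ x ∈ Finset.range j, q^(x+1) = q * ∑ x ∈ Finset.range j, q^x := by
          rw [Finset.mul_sum]; exact Finset.sum_congr rfl (fun x _ => by ring)
      _ ≤ q * (1-q)⁻¹ := by
          apply mul_le_mul_of_nonneg_left hg hq0.le
  have h2 : ∑ x ∈ Finset.range j, -(q^(x+1)/(1-q))
      = -((∑ x ∈ Finset.range j, q^(x+1))/(1-q)) := by
    rw [Finset.sum_neg_distrib, Finset.sum_div]
  rw [h2, neg_le_neg_iff]
  calc (∑ x ∈ Finset.range j, q^(x+1))/(1-q) ≤ (q * (1-q)⁻¹)/(1-q) := by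
        exact div_le_div_of_nonneg_right h1 hq'.le
    _ = q/(1-q)^2 := by
        rw [div_eq_div_iff hq'.ne' (by positivity)]
        field_simp

lemma cseq_abs_le {q : ℝ} (hq0 : 0 < q) (hq1 : q < 1) (j : ℕ) :
    |cseq q j| ≤ q ^ (j*(j-1)/2) * Real.exp (q/(1-q)^2) := by
  have hP := prod_lb hq0 hq1 j
  have hprod := cseq_prod hq0 hq1 j
  have hPpos : (0:ℝ) < Real.exp (-(q/(1-q)^2)) := Real.exp_pos _
  have habs : 0 ≤ |cseq q j| := abs_nonneg _
  have h1 : |cseq q j| * Real.exp (-(q/(1-q)^2)) ≤ q ^ (j*(j-1)/2) := by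
    calc |cseq q j| * Real.exp (-(q/(1-q)^2))
        ≤ |cseq q j| * ∏ i ∈ Finset.range j, (1 - q^(i+1)) :=
          mul_le_mul_of_nonneg_left hP habs
      _ = q ^ (j*(j-1)/2) := hprod
  have := (le_div_iff₀ hPpos).2 h1
  rwa [Real.exp_neg, div_eq_mul_inv, inv_inv] at this

lemma cseq_summable {q : ℝ} (hq0 : 0 < q) (hq1 : q < 1) (x : ℝ) :
    Summable (fun j : ℕ => cseq q j * x ^ j) := by
  apply summable_of_ratio_norm_eventually_le (show (1:ℝ)/2 < 1 by norm_num)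
  have hq' : 0 < 1 - q := by linarith
  have htend : Tendsto (fun j : ℕ => q ^ j) atTop (nhds 0) :=
    tendsto_pow_atTop_nhds_zero_of_lt_one hq0.le hq1
  have hev : ∀ᶠ j : ℕ in atTop, q ^ j * (|x| + 1) ≤ (1 - q) / 2 := by
    have := htend.eventually (ge_mem_nhds (show (0:ℝ) < (1-q)/(2*(|x|+1)) by positivity))
    filter_upwards [this] with j hj
    rw [← le_div_iff₀ (by positivity)]
    calc q ^ j ≤ (1-q)/(2*(|x|+1)) := hj
      _ = (1-q)/2/(|x|+1) := by rw [div_div]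
  filter_upwards [hev] with j hj
  have hqj : q^(j+1) < 1 := pow_lt_one₀ hq0.le hq1 (by omega)
  have hpos : 0 < 1 - q^(j+1) := by linarith
  have habs : |cseq q (j+1)| = (q^j / (1 - q^(j+1))) * |cseq q j| := by
    rw [show cseq q (j+1) = -(q^j / (1 - q^(j+1))) * cseq q j from rfl]
    rw [abs_mul, abs_neg, abs_of_nonneg (by positivity)]
  simp only [Real.norm_eq_abs, abs_mul, abs_pow]
  rw [habs, pow_succ]
  have hx : |x| ≤ |x| + 1 := by linarith
  have h1q : 1 - q ≤ 1 - q^(j+1) := by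
    have : q^(j+1) ≤ q := by
      have : q^(j+1) ≤ q^1 := pow_le_pow_of_le_one hq0.le hq1.le (by omega)
      simpa using this
    linarith
  have key : q^j / (1 - q^(j+1)) * |x| ≤ 1/2 := by
    rw [div_mul_eq_mul_div, div_le_iff₀ hpos]
    calc q^j * |x| ≤ q^j * (|x| + 1) := by
          apply mul_le_mul_of_nonneg_left hx (by positivity)
      _ ≤ (1-q)/2 := hj
      _ ≤ (1-q^(j+1))/2 := by linarith
      _ = 1/2 * (1 - q^(j+1)) := by ring
  calc q^j / (1 - q^(j+1)) * |cseq q j| * (|x|^j * |x|)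
      = (q^j / (1 - q^(j+1)) * |x|) * (|cseq q j| * |x|^j) := by ring
    _ ≤ 1/2 * (|cseq q j| * |x|^j) := by
        apply mul_le_mul_of_nonneg_right key (by positivity)

lemma cseq_feq {q : ℝ} (hq0 : 0 < q) (hq1 : q < 1) (x : ℝ) :
    ∑' j : ℕ, cseq q j * x ^ j = (1 - x) * ∑' j : ℕ, cseq q j * (q*x) ^ j := by
  have S1 := cseq_summable hq0 hq1 x
  have S2 := cseq_summable hq0 hq1 (q*x)
  have S3 : Summable (fun j : ℕ => x * (cseq q j * (q*x)^j)) := S2.mul_left x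
  have hsub : Summable (fun j : ℕ => cseq q j * x^j - cseq q j * (q*x)^j) := S1.sub S2
  have key : ∑' j : ℕ, (cseq q j * x^j - cseq q j * (q*x)^j)
      = - ∑' j : ℕ, x * (cseq q j * (q*x)^j) := by
    rw [Summable.tsum_eq_zero_add hsub]
    have h0 : cseq q 0 * x^0 - cseq q 0 * (q*x)^0 = 0 := by simp [cseq]
    rw [h0, zero_add, ← tsum_neg]
    apply tsum_congr
    intro j
    have hqj : q^(j+1) < 1 := pow_lt_one₀ hq0.le hq1 (by omega)
    have hpos : (1 : ℝ) - q^(j+1) ≠ 0 := by intro h; nlinarith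
    have hrec : cseq q (j+1) * (1 - q^(j+1)) = -(q^j) * cseq q j := by
      rw [show cseq q (j+1) = -(q^j / (1 - q^(j+1))) * cseq q j from rfl]
      field_simp
    have expand : cseq q (j+1) * x^(j+1) - cseq q (j+1) * (q*x)^(j+1)
        = (cseq q (j+1) * (1 - q^(j+1))) * x^(j+1)
          + cseq q (j+1) * (q^(j+1) * x^(j+1) - (q*x)^(j+1)) := by ring
    rw [expand, hrec]
    have : (q*x)^(j+1) = q^(j+1) * x^(j+1) := mul_pow _ _ _
    rw [this]
    have : (q*x)^j = q^j * x^j := mul_pow _ _ _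
    rw [this]
    ring
  have h4 : ∑' j : ℕ, x * (cseq q j * (q*x)^j) = x * ∑' j : ℕ, cseq q j * (q*x)^j :=
    tsum_mul_left
  have h5 := Summable.tsum_sub S1 S2
  rw [h5, h4] at key
  linarith [key]

lemma cseq_zero {q : ℝ} (hq0 : 0 < q) (hq1 : q < 1) (k : ℕ) :
    ∑' j : ℕ, cseq q j * ((q⁻¹) ^ k) ^ j = 0 := by
  induction k with
  | zero =>
    have := cseq_feq hq0 hq1 1
    simpa using this
  | succ k ih =>
    have hfe := cseq_feq hq0 hq1 ((q⁻¹)^(k+1))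
    have hqx : q * (q⁻¹)^(k+1) = (q⁻¹)^k := by
      rw [pow_succ]
      field_simp
    rw [hqx] at hfe
    rw [hfe, ih, mul_zero]

set_option maxHeartbeats 4000000 in
theorem log_concave_stieltjes_exists (p : ℕ → ℝ) (hp : ∀ j, 0 < p j)
    (hpsum : ∑' j, p j = 1)
    (hlc : ∀ j : ℕ, 1 ≤ j → p (j - 1) * p (j + 1) ≤ (p j) ^ 2)
    (hent : ∀ r : ℝ, 0 < r → Summable (fun j : ℕ => p j * r ^ j))
    (β : ℝ) (hβ : 0 < β)
    (hlim : Tendsto (fun r : ℝ => Real.log (∑' j : ℕ, p j * r ^ j) / (Real.log r) ^ 2)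
      atTop (nhds β))
    (a : ℝ) (ha : Real.exp (1 / (2 * β)) < a) :
    (∃ C > (0 : ℝ), ∀ j : ℕ, C * (a ^ (j * (j - 1) / 2))⁻¹ ≤ p j) ∧
    (∃ h : ℕ → ℝ, h ≠ 0 ∧ (⨆ j : ℕ, |h j|) = 1 ∧
      ∀ k : ℕ, Summable (fun j : ℕ => |a ^ (k * j) * p j * h j|) ∧
        (∑' j : ℕ, a ^ (k * j) * p j * h j) = 0) ∧
    (∃ p' : ℕ → ℝ, (∀ j, 0 ≤ p' j) ∧ (∑' j, p' j) = 1 ∧ p' ≠ p ∧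
      ∀ k : ℕ, (∑' j : ℕ, a ^ (k * j) * p' j) = ∑' j : ℕ, a ^ (k * j) * p j) := by
  have ha1 : (1:ℝ) < a := by
    have h0 : (1:ℝ) < Real.exp (1/(2*β)) := by
      rw [show (1:ℝ) = Real.exp 0 from (Real.exp_zero).symm]
      exact Real.exp_lt_exp.2 (by positivity)
    linarith
  have ha0 : (0:ℝ) < a := by linarith
  obtain ⟨q, hqdef⟩ : ∃ q : ℝ, q = a⁻¹ := ⟨_, rfl⟩
  have hq0 : 0 < q := by rw [hqdef]; positivity
  have hq1 : q < 1 := by rw [hqdef]; exact inv_lt_one_of_one_lt₀ ha1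
  obtain ⟨A, hAdef⟩ : ∃ A : ℝ, A = Real.log a := ⟨_, rfl⟩
  have hA : 1/(2*β) < A := by
    have := Real.log_lt_log (Real.exp_pos _) ha
    rwa [Real.log_exp, ← hAdef] at this
  have hA0 : 0 < A := lt_trans (by positivity) hA
  have h2βA : 1 < 2*β*A := by
    rw [div_lt_iff₀ (by positivity)] at hA
    nlinarith
  obtain ⟨ε, hε0, hεβ, h2bA', hγpos'⟩ :
      ∃ ε : ℝ, 0 < ε ∧ ε < β ∧ 1 < 2*(β-ε)*A ∧
        0 < (β-ε)*A^2 - A + (β-ε)/(4*β^2) := by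
    have hm : (0:ℝ) < A^2 + 1/(4*β^2) := by positivity
    have hγ0 : (0:ℝ) < (2*β*A-1)^2/(4*β) := by
      apply div_pos (by nlinarith) (by positivity)
    have hu : (0:ℝ) < (β - 1/(2*A))/2 := by
      have : 1/(2*A) < β := by rw [div_lt_iff₀ (by positivity)]; nlinarith
      linarith
    refine ⟨min ((β - 1/(2*A))/2) (((2*β*A-1)^2/(4*β))/(2*(A^2 + 1/(4*β^2)))),
      lt_min hu (by positivity), ?_, ?_, ?_⟩
    · have h1 := min_le_left ((β - 1/(2*A))/2) (((2*β*A-1)^2/(4*β))/(2*(A^2 + 1/(4*β^2))))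
      have h2 : 0 < 1/(2*A) := by positivity
      linarith
    · have h1 := min_le_left ((β - 1/(2*A))/2) (((2*β*A-1)^2/(4*β))/(2*(A^2 + 1/(4*β^2))))
      have hw : 1/(2*A) * (2*A) = 1 := by field_simp
      nlinarith [hA0]
    · have h1 := min_le_right ((β - 1/(2*A))/2) (((2*β*A-1)^2/(4*β))/(2*(A^2 + 1/(4*β^2))))
      set εv := min ((β - 1/(2*A))/2) (((2*β*A-1)^2/(4*β))/(2*(A^2 + 1/(4*β^2)))) with hεv
      have hεv0 : 0 < εv := lt_min hu (by positivity)
      have hid : (β-εv)*A^2 - A + (β-εv)/(4*β^2)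
          = (2*β*A-1)^2/(4*β) - εv*(A^2 + 1/(4*β^2)) := by
        field_simp
        ring
      have h2 : εv*(A^2 + 1/(4*β^2)) ≤ (2*β*A-1)^2/(4*β)/2 := by
        have := mul_le_mul_of_nonneg_right h1 hm.le
        calc εv*(A^2 + 1/(4*β^2)) ≤ ((2*β*A-1)^2/(4*β))/(2*(A^2 + 1/(4*β^2)))*(A^2 + 1/(4*β^2)) := this
          _ = (2*β*A-1)^2/(4*β)/2 := by field_simp
      rw [hid]
      linarith
  obtain ⟨b, hbdef⟩ : ∃ b : ℝ, b = β - ε := ⟨_, rfl⟩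
  rw [← hbdef] at h2bA' hγpos'
  have hb0 : 0 < b := by rw [hbdef]; linarith
  obtain ⟨c, hcdef⟩ : ∃ c : ℝ, c = b/(4*β^2) := ⟨_, rfl⟩
  rw [← hcdef] at hγpos'
  have hc0 : 0 < c := by rw [hcdef]; positivity
  obtain ⟨γ, hγdef⟩ : ∃ γ : ℝ, γ = b*A^2 - A + c := ⟨_, rfl⟩
  rw [← hγdef] at hγpos'
  have hγ0 : 0 < γ := hγpos'
  -- growth window
  have hfpos : ∀ r : ℝ, 0 < r → 0 < ∑' j : ℕ, p j * r^j := by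
    intro r hr
    have := Summable.le_tsum (hent r hr) 0 (fun j _ => mul_nonneg (hp j).le (pow_nonneg hr.le j))
    simp only [pow_zero, mul_one] at this
    linarith [hp 0]
  obtain ⟨R0, hR0⟩ := eventually_atTop.1
    (hlim (Ioo_mem_nhds (show β - ε < β by linarith) (show β < β + ε by linarith)))
  obtain ⟨R, hRdef⟩ : ∃ R : ℝ, R = max R0 2 := ⟨_, rfl⟩
  have hR2 : (2:ℝ) ≤ R := by rw [hRdef]; exact le_max_right _ _
  have hRpos : (0:ℝ) < R := by linarith
  have hRrange : ∀ r : ℝ, R ≤ r →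
      (β-ε)*(Real.log r)^2 ≤ Real.log (∑' j : ℕ, p j * r^j) ∧
      Real.log (∑' j : ℕ, p j * r^j) ≤ (β+ε)*(Real.log r)^2 := by
    intro r hr
    have h := hR0 r (le_trans (by rw [hRdef]; exact le_max_left _ _) hr)
    have hr1 : (1:ℝ) < r := by linarith
    have hlr : 0 < Real.log r := Real.log_pos hr1
    have hlr2 : 0 < (Real.log r)^2 := by positivity
    obtain ⟨hlow, hhigh⟩ := h
    constructor
    · have := (lt_div_iff₀ hlr2).1 hlow
      linarith
    · have := (div_lt_iff₀ hlr2).1 hhigh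
      linarith
  -- Step A : coefficient upper bound
  obtain ⟨J1, hJ1def⟩ : ∃ J1 : ℕ, J1 = ⌈2*β*Real.log R⌉₊ + 1 := ⟨_, rfl⟩
  have hJ1 : ∀ N : ℕ, J1 ≤ N → p N ≤ Real.exp (-(c * N^2)) := by
    intro N hN
    obtain ⟨x, hxdef⟩ : ∃ x : ℝ, x = Real.exp (N/(2*β)) := ⟨_, rfl⟩
    have hx0 : 0 < x := by rw [hxdef]; exact Real.exp_pos _
    have hxR : R ≤ x := by
      have h1 : 2*β*Real.log R ≤ (⌈2*β*Real.log R⌉₊ : ℝ) := Nat.le_ceil _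
      have h2 : (J1:ℝ) ≤ N := Nat.cast_le.2 hN
      have h3 : (J1:ℝ) = (⌈2*β*Real.log R⌉₊ : ℝ) + 1 := by rw [hJ1def]; push_cast; ring
      have h4 : Real.log R ≤ (N:ℝ)/(2*β) := by
        rw [le_div_iff₀ (by positivity)]
        nlinarith
      rw [hxdef]
      calc R = Real.exp (Real.log R) := (Real.exp_log hRpos).symm
        _ ≤ Real.exp ((N:ℝ)/(2*β)) := Real.exp_le_exp.2 h4
    have hub := (hRrange x hxR).2
    have hterm : p N * x^N ≤ ∑' j : ℕ, p j * x^j :=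
      Summable.le_tsum (hent x hx0) N (fun j _ => mul_nonneg (hp j).le (pow_nonneg hx0.le j))
    have hlogx : Real.log x = N/(2*β) := by rw [hxdef]; exact Real.log_exp _
    have hmono : Real.log (p N * x^N) ≤ Real.log (∑' j : ℕ, p j * x^j) :=
      Real.log_le_log (mul_pos (hp N) (pow_pos hx0 N)) hterm
    have hlogm : Real.log (p N * x^N) = Real.log (p N) + N * Real.log x := by
      rw [Real.log_mul (hp N).ne' (pow_pos hx0 N).ne', Real.log_pow]
    have hval : (β+ε)*((N:ℝ)/(2*β))^2 - N*((N:ℝ)/(2*β)) = -(c*(N:ℝ)^2) := by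
      rw [hcdef, hbdef]
      field_simp
      ring
    have hfin : Real.log (p N) ≤ -(c*(N:ℝ)^2) := by
      rw [hlogm, hlogx] at hmono
      rw [hlogx] at hub
      linarith
    calc p N = Real.exp (Real.log (p N)) := (Real.exp_log (hp N)).symm
      _ ≤ _ := Real.exp_le_exp.2 hfin
  -- ratio lemmas
  obtain ⟨rat, hrat⟩ : ∃ rat : ℕ → ℝ, ∀ n, rat n = p (n+1) / p n := ⟨_, fun _ => rfl⟩
  have hrpos : ∀ n, 0 < rat n := fun n => by rw [hrat]; exact div_pos (hp _) (hp _)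
  have hranti : Antitone rat := by
    apply antitone_nat_of_succ_le
    intro n
    rw [hrat, hrat]
    rw [div_le_div_iff₀ (hp _) (hp _)]
    have h := hlc (n+1) (by omega)
    simp only [Nat.add_sub_cancel] at h
    calc p (n+1+1) * p n = p n * p (n+1+1) := mul_comm _ _
      _ ≤ p (n+1)^2 := h
      _ = p (n+1) * p (n+1) := pow_two _
  have hup : ∀ N m : ℕ, p (N+m) ≤ p N * rat N ^ m := by
    intro N m
    induction m with
    | zero => simp
    | succ m ih =>
      have heq : p (N+m+1) = rat (N+m) * p (N+m) := by
        rw [hrat, div_mul_cancel₀ _ (hp (N+m)).ne']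
      calc p (N+(m+1)) = rat (N+m) * p (N+m) := heq
        _ ≤ rat N * (p N * rat N ^ m) := by
            apply mul_le_mul (hranti (Nat.le_add_right N m)) ih (hp _).le (hrpos N).le
        _ = p N * rat N ^ (m+1) := by ring
  have hdown : ∀ m j : ℕ, p j * rat (j+m) ^ m ≤ p (j+m) := by
    intro m
    induction m with
    | zero => intro j; simp
    | succ m ih =>
      intro j
      have h1 : rat (j+m+1) ≤ rat j := hranti (by omega)
      have heq : p j * rat j = p (j+1) := by
        rw [hrat, mul_div_cancel₀ _ (hp j).ne']
      have hidx : j + 1 + m = j + (m+1) := by omega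
      calc p j * rat (j+(m+1))^(m+1)
          = (p j * rat (j+(m+1))) * rat (j+(m+1))^m := by ring
        _ ≤ (p j * rat j) * rat (j+(m+1))^m := by
            apply mul_le_mul_of_nonneg_right
              (mul_le_mul_of_nonneg_left (by rw [show j+(m+1) = j+m+1 from rfl]; exact h1) (hp j).le)
              (pow_nonneg (hrpos _).le m)
        _ = p (j+1) * rat (j+1+m)^m := by rw [heq, hidx]
        _ ≤ p (j+1+m) := ih (j+1)
        _ = p (j+(m+1)) := by rw [hidx]
  have hkey : ∀ N j : ℕ, p j * rat N ^ N ≤ p N * rat N ^ j := by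
    intro N j
    rcases le_or_gt N j with h | h
    · obtain ⟨m, rfl⟩ := Nat.exists_eq_add_of_le h
      calc p (N+m) * rat N ^ N ≤ (p N * rat N^m) * rat N^N :=
            mul_le_mul_of_nonneg_right (hup N m) (pow_nonneg (hrpos _).le N)
        _ = p N * rat N ^ (N+m) := by rw [pow_add]; ring
    · obtain ⟨m, rfl⟩ : ∃ m, N = j + m := ⟨N - j, by omega⟩
      calc p j * rat (j+m) ^ (j+m) = (p j * rat (j+m)^m) * rat (j+m)^j := by
            rw [pow_add]; ring
        _ ≤ p (j+m) * rat (j+m)^j :=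
            mul_le_mul_of_nonneg_right (hdown m j) (pow_nonneg (hrpos _).le j)
  obtain ⟨L2, hL2def⟩ : ∃ L2 : ℝ, L2 = Real.log 2 := ⟨_, rfl⟩
  have hL2nn : 0 ≤ L2 := by rw [hL2def]; exact Real.log_nonneg (by norm_num)
  have h2bA1 : 0 < 2*b*A - 1 := by linarith [h2bA']
  obtain ⟨J0, hJ0def⟩ : ∃ J0 : ℕ, J0 = max (max J1 1)
      (⌈max (Real.log (2*R)/A) (max ((2*b*L2)/(2*b*A-1)) ((2*b*A*L2 + L2 + 1)/γ))⌉₊ + 1) :=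
    ⟨_, rfl⟩
  have hstep : ∀ N : ℕ, J0 ≤ N → q^N * p N ≤ p (N+1) := by
    intro N hN
    by_contra hcon
    push_neg at hcon
    rw [hJ0def] at hN
    have hNJ1 : J1 ≤ N := le_trans (le_trans (le_max_left _ _) (le_max_left _ _)) hN
    have hN1 : (1:ℝ) ≤ (N:ℝ) := by
      have : 1 ≤ N := le_trans (le_trans (le_max_right _ _) (le_max_left _ _)) hN
      exact_mod_cast this
    have hNE : max (Real.log (2*R)/A) (max ((2*b*L2)/(2*b*A-1)) ((2*b*A*L2 + L2 + 1)/γ))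
        ≤ (N:ℝ) := by
      have h1 : (⌈max (Real.log (2*R)/A) (max ((2*b*L2)/(2*b*A-1)) ((2*b*A*L2 + L2 + 1)/γ))⌉₊ + 1 : ℕ) ≤ N :=
        le_trans (le_max_right _ _) hN
      have h2 : ((⌈max (Real.log (2*R)/A) (max ((2*b*L2)/(2*b*A-1)) ((2*b*A*L2 + L2 + 1)/γ))⌉₊ : ℕ) : ℝ) ≤ (N:ℝ) := by
        exact_mod_cast (by omega : (⌈max (Real.log (2*R)/A) (max ((2*b*L2)/(2*b*A-1)) ((2*b*A*L2 + L2 + 1)/γ))⌉₊ : ℕ) ≤ N)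
      exact le_trans (Nat.le_ceil _) h2
    have hcond_b : Real.log (2*R) ≤ N*A := by
      have h1 : Real.log (2*R)/A ≤ (N:ℝ) := le_trans (le_max_left _ _) hNE
      rw [div_le_iff₀ hA0] at h1
      linarith
    have hcond_c : 2*b*L2 ≤ N*(2*b*A-1) := by
      have h1 : (2*b*L2)/(2*b*A-1) ≤ (N:ℝ) :=
        le_trans (le_trans (le_max_left _ _) (le_max_right _ _)) hNE
      rw [div_le_iff₀ h2bA1] at h1
      linarith
    have hcond_d : 2*b*A*L2 + L2 + 1 ≤ N*γ := by
      have h1 : (2*b*A*L2 + L2 + 1)/γ ≤ (N:ℝ) :=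
        le_trans (le_trans (le_max_right _ _) (le_max_right _ _)) hNE
      rw [div_le_iff₀ hγ0] at h1
      linarith
    have hrN0 : 0 < rat N := hrpos N
    have hrNlt : rat N < q^N := by
      rw [hrat, div_lt_iff₀ (hp N)]
      linarith [hcon]
    obtain ⟨x, hxdef⟩ : ∃ x : ℝ, x = (2*rat N)⁻¹ := ⟨_, rfl⟩
    have hx0 : 0 < x := by rw [hxdef]; exact inv_pos.2 (by linarith)
    have haN : (2*R:ℝ) ≤ a^N := by
      have h1 : (a:ℝ)^N = Real.exp ((N:ℝ)*A) := by
        rw [hAdef, ← Real.log_pow, Real.exp_log (pow_pos ha0 N)]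
      rw [h1]
      calc (2*R:ℝ) = Real.exp (Real.log (2*R)) := (Real.exp_log (by linarith)).symm
        _ ≤ Real.exp ((N:ℝ)*A) := Real.exp_le_exp.2 hcond_b
    have hqN : q^N = (a^N)⁻¹ := by rw [hqdef, inv_pow]
    have hxR : R ≤ x := by
      have h1 : (0:ℝ) < 2*rat N := by linarith
      have h2 : 2*rat N < 2*q^N := by linarith
      have h3 : (2*q^N)⁻¹ ≤ x := by
        rw [hxdef]
        exact inv_anti₀ h1 h2.le
      have h4 : (2*q^N)⁻¹ = a^N/2 := by
        rw [hqN]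
        have hap : (0:ℝ) < a^N := pow_pos ha0 N
        field_simp
      have h5 : R ≤ a^N/2 := by linarith
      linarith [h4 ▸ h3]
    have hhalf : rat N * x = 1/2 := by
      rw [hxdef]
      field_simp
    have hfb : ∑' j : ℕ, p j * x^j ≤ (p N / rat N^N) * 2 := by
      have hsumg : Summable (fun j : ℕ => (p N / rat N^N) * (1/2:ℝ)^j) :=
        (summable_geometric_of_lt_one (by norm_num) (by norm_num)).mul_left _
      have hterm : ∀ j, p j * x^j ≤ (p N / rat N^N) * (1/2:ℝ)^j := by
        intro j
        have hk := hkey N j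
        have h12 : (1/2:ℝ)^j = rat N^j * x^j := by
          rw [← hhalf, mul_pow]
        rw [h12, div_mul_eq_mul_div, le_div_iff₀ (pow_pos hrN0 N)]
        calc p j * x^j * rat N^N = (p j * rat N^N) * x^j := by ring
          _ ≤ (p N * rat N^j) * x^j :=
              mul_le_mul_of_nonneg_right hk (pow_nonneg hx0.le j)
          _ = p N * (rat N^j * x^j) := by ring
      have h6 := Summable.tsum_le_tsum hterm (hent x hx0) hsumg
      rw [tsum_mul_left, tsum_geometric_of_lt_one (by norm_num) (by norm_num)] at h6
      calc ∑' j : ℕ, p j * x^j ≤ p N / rat N^N * ((1:ℝ) - 1/2)⁻¹ := h6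
        _ = (p N / rat N^N) * 2 := by norm_num
    obtain ⟨s, hsdef⟩ : ∃ s : ℝ, s = -Real.log (rat N) := ⟨_, rfl⟩
    have hsNA : (N:ℝ)*A < s := by
      have h1 := Real.log_lt_log hrN0 hrNlt
      have h2 : Real.log (q^N) = -((N:ℝ)*A) := by
        rw [Real.log_pow, hqdef, Real.log_inv, hAdef]
        ring
      rw [h2] at h1
      rw [hsdef]
      linarith
    have hlogx : Real.log x = s - L2 := by
      rw [hxdef, Real.log_inv, Real.log_mul two_ne_zero hrN0.ne', hsdef, hL2def]
      ring
    have hflow := (hRrange x hxR).1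
    have hlogfb : Real.log (∑' j : ℕ, p j * x^j) ≤ L2 + Real.log (p N) + N*s := by
      have h1 : Real.log ((p N / rat N^N)*2)
          = Real.log (p N) - N*Real.log (rat N) + L2 := by
        rw [Real.log_mul (div_pos (hp N) (pow_pos hrN0 N)).ne' two_ne_zero,
          Real.log_div (hp N).ne' (pow_pos hrN0 N).ne', Real.log_pow, hL2def]
      have h2 := Real.log_le_log (hfpos x hx0) hfb
      rw [h1] at h2
      have h3 : -((N:ℝ)*Real.log (rat N)) = N*s := by rw [hsdef]; ring
      linarith [h2]
    have hlogpN : Real.log (p N) ≤ -(c*(N:ℝ)^2) := by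
      have h1 := hJ1 N hNJ1
      calc Real.log (p N) ≤ Real.log (Real.exp (-(c*(N:ℝ)^2))) :=
            Real.log_le_log (hp N) h1
        _ = -(c*(N:ℝ)^2) := Real.log_exp _
    have hmain : b*(s - L2)^2 ≤ L2 - c*(N:ℝ)^2 + N*s := by
      rw [hlogx] at hflow
      rw [hbdef]
      linarith only [hflow, hlogfb, hlogpN]
    have e1 : (0:ℝ) ≤ b*(s - N*A)^2 := mul_nonneg hb0.le (sq_nonneg _)
    have e2 : (0:ℝ) ≤ (2*b*((N:ℝ)*A - L2) - N) * (s - N*A) := by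
      apply mul_nonneg _ (by linarith only [hsNA])
      linarith only [hcond_c]
    have e3 : (1:ℝ) ≤ b*((N:ℝ)*A - L2)^2 - A*(N:ℝ)^2 + c*(N:ℝ)^2 - L2 := by
      have h6 : (N:ℝ)*(2*b*A*L2 + L2 + 1) ≤ N*(N*γ) :=
        mul_le_mul_of_nonneg_left hcond_d (by linarith)
      rw [hγdef] at h6
      nlinarith only [h6, hN1, hL2nn, mul_nonneg hb0.le (sq_nonneg L2),
        mul_nonneg (sub_nonneg.2 hN1) hL2nn]
    have hkey2 : b*(s-L2)^2 - N*s + c*(N:ℝ)^2 - L2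
        = b*(s - N*A)^2 + (2*b*((N:ℝ)*A-L2) - N)*(s - N*A)
          + (b*((N:ℝ)*A-L2)^2 - A*(N:ℝ)^2 + c*(N:ℝ)^2 - L2) := by ring
    linarith only [hmain, e1, e2, e3, hkey2]
  -- Part 1
  have hscale : ∀ m : ℕ, p J0 * q^((J0+m)*((J0+m)-1)/2) ≤ p (J0+m) * q^(J0*(J0-1)/2) := by
    intro m
    induction m with
    | zero => simp
    | succ m ih =>
      have hT : ((J0+m)+1)*(((J0+m)+1)-1)/2 = (J0+m)*((J0+m)-1)/2 + (J0+m) := tri_succ (J0+m)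
      have hidx : J0 + (m+1) = (J0+m)+1 := rfl
      rw [hidx, hT, pow_add]
      calc p J0 * (q^((J0+m)*((J0+m)-1)/2) * q^(J0+m))
          = (p J0 * q^((J0+m)*((J0+m)-1)/2)) * q^(J0+m) := by ring
        _ ≤ (p (J0+m) * q^(J0*(J0-1)/2)) * q^(J0+m) :=
            mul_le_mul_of_nonneg_right ih (pow_nonneg hq0.le _)
        _ = (q^(J0+m) * p (J0+m)) * q^(J0*(J0-1)/2) := by ring
        _ ≤ p ((J0+m)+1) * q^(J0*(J0-1)/2) :=
            mul_le_mul_of_nonneg_right (hstep (J0+m) (Nat.le_add_right J0 m))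
              (pow_nonneg hq0.le _)
  have hqpow : ∀ n : ℕ, (a^n)⁻¹ = q^n := by intro n; rw [hqdef, inv_pow]
  obtain ⟨C, hC0, hCle⟩ : ∃ C > (0:ℝ), ∀ j : ℕ, C * (a ^ (j * (j - 1) / 2))⁻¹ ≤ p j := by
    obtain ⟨C0, hC0def⟩ : ∃ C0 : ℝ,
        C0 = min ((Finset.range (J0+1)).inf' ⟨0, by simp⟩ p) (p J0 / q^(J0*(J0-1)/2)) :=
      ⟨_, rfl⟩
    have hC0pos : 0 < C0 := by
      rw [hC0def]
      apply lt_min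
      · refine (Finset.lt_inf'_iff _).2 ?_
        intro i _
        exact hp i
      · exact div_pos (hp J0) (pow_pos hq0 _)
    refine ⟨C0, hC0pos, ?_⟩
    intro j
    rw [hqpow]
    rcases le_or_gt J0 j with hj | hj
    · obtain ⟨m, rfl⟩ := Nat.exists_eq_add_of_le hj
      have h1 := hscale m
      have h2 : (p J0 / q^(J0*(J0-1)/2)) * q^((J0+m)*((J0+m)-1)/2) ≤ p (J0+m) := by
        rw [div_mul_eq_mul_div, div_le_iff₀ (pow_pos hq0 _)]
        linarith only [h1]
      have h3 : C0 ≤ p J0 / q^(J0*(J0-1)/2) := by rw [hC0def]; exact min_le_right _ _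
      calc C0 * q^((J0+m)*((J0+m)-1)/2)
          ≤ (p J0 / q^(J0*(J0-1)/2)) * q^((J0+m)*((J0+m)-1)/2) :=
            mul_le_mul_of_nonneg_right h3 (pow_nonneg hq0.le _)
        _ ≤ p (J0+m) := h2
    · have h1 : q^(j*(j-1)/2) ≤ 1 := pow_le_one₀ hq0.le hq1.le
      have h2 : C0 ≤ (Finset.range (J0+1)).inf' ⟨0, by simp⟩ p := by
        rw [hC0def]; exact min_le_left _ _
      have h3 : (Finset.range (J0+1)).inf' ⟨0, by simp⟩ p ≤ p j :=
        Finset.inf'_le _ (Finset.mem_range.2 (by omega))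
      calc C0 * q^(j*(j-1)/2) ≤ C0 * 1 :=
            mul_le_mul_of_nonneg_left h1 hC0pos.le
        _ = C0 := mul_one _
        _ ≤ p j := le_trans h2 h3
  -- common material for parts 2 and 3
  obtain ⟨P, hPdef⟩ : ∃ P : ℝ, P = Real.exp (q/(1-q)^2) := ⟨_, rfl⟩
  have hPpos : 0 < P := by rw [hPdef]; exact Real.exp_pos _
  have hcabs : ∀ j : ℕ, |cseq q j| ≤ q^(j*(j-1)/2) * P := by
    intro j; rw [hPdef]; exact cseq_abs_le hq0 hq1 j
  have hcbound : ∀ j : ℕ, |cseq q j| ≤ (P/C) * p j := by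
    intro j
    have h1 := hCle j
    rw [hqpow] at h1
    have h2 : q^(j*(j-1)/2) ≤ p j / C := by rw [le_div_iff₀ hC0]; linarith only [h1]
    calc |cseq q j| ≤ q^(j*(j-1)/2) * P := hcabs j
      _ ≤ (p j / C) * P := mul_le_mul_of_nonneg_right h2 hPpos.le
      _ = (P/C) * p j := by ring
  have hsum0 : ∀ k : ℕ, ∑' j : ℕ, cseq q j * ((a:ℝ)^k)^j = 0 := by
    intro k
    have h1 := cseq_zero hq0 hq1 k
    have h2 : q⁻¹ = a := by rw [hqdef, inv_inv]
    rw [h2] at h1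
    exact h1
  have hsummc : ∀ x : ℝ, Summable (fun j : ℕ => cseq q j * x^j) := cseq_summable hq0 hq1
  refine ⟨⟨C, hC0, hCle⟩, ?_, ?_⟩
  · -- Part 2 : the perturbation h
    have hbdd : BddAbove (Set.range (fun j : ℕ => |cseq q j| / p j)) := by
      refine ⟨P/C, ?_⟩
      rintro y ⟨j, rfl⟩
      simp only
      rw [div_le_iff₀ (hp j)]
      exact hcbound j
    obtain ⟨s, hsdef⟩ : ∃ s : ℝ, s = ⨆ j : ℕ, |cseq q j| / p j := ⟨_, rfl⟩
    have hlub : IsLUB (Set.range (fun j : ℕ => |cseq q j| / p j)) s := by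
      rw [hsdef]; exact isLUB_ciSup hbdd
    have hs_ge : ∀ j : ℕ, |cseq q j| / p j ≤ s := fun j => hlub.1 ⟨j, rfl⟩
    have hs0 : 0 < s := by
      have h0 := hs_ge 0
      have h1 : |cseq q 0| = 1 := by rw [show cseq q 0 = 1 from rfl]; exact abs_one
      rw [h1] at h0
      have : 0 < 1 / p 0 := div_pos one_pos (hp 0)
      linarith
    refine ⟨fun j => cseq q j / (s * p j), ?_, ?_, ?_⟩
    · intro hzero
      have h0 := congrFun hzero 0
      rw [show cseq q 0 = 1 from rfl] at h0
      have hne : (s * p 0) ≠ 0 := (mul_pos hs0 (hp 0)).ne'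
      rw [Pi.zero_apply, div_eq_zero_iff] at h0
      rcases h0 with h | h
      · exact one_ne_zero h
      · exact hne h
    · -- sup = 1
      have habsj : ∀ j : ℕ, |cseq q j / (s * p j)| = (|cseq q j| / p j) / s := by
        intro j
        rw [abs_div, abs_of_pos (mul_pos hs0 (hp j))]
        rw [div_div]
        rw [mul_comm s (p j)]
      apply IsLUB.ciSup_eq
      constructor
      · rintro y ⟨j, rfl⟩
        simp only
        rw [habsj j, div_le_one hs0]
        exact hs_ge j
      · intro u hu
        have h1 : ∀ j : ℕ, |cseq q j| / p j ≤ u * s := by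
          intro j
          have h2 := hu ⟨j, rfl⟩
          simp only at h2
          rw [habsj j, div_le_iff₀ hs0] at h2
          exact h2
        have h3 : s ≤ u * s := hlub.2 (by rintro y ⟨j, rfl⟩; exact h1 j)
        have h4 : (0:ℝ) < s := hs0
        nlinarith [h3, h4]
    · intro k
      have hak : (0:ℝ) < a^k := pow_pos ha0 k
      have heq1 : ∀ j : ℕ, a^(k*j) * p j * (cseq q j / (s * p j))
          = (cseq q j * ((a:ℝ)^k)^j) * s⁻¹ := by
        intro j
        rw [pow_mul]
        field_simp [hs0.ne', (hp j).ne']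
      constructor
      · apply Summable.congr (((hsummc ((a:ℝ)^k)).abs.mul_right s⁻¹))
        intro j
        rw [← abs_of_pos (inv_pos.2 hs0), ← abs_mul, ← heq1 j]
      · calc ∑' j : ℕ, a^(k*j) * p j * (cseq q j / (s * p j))
            = ∑' j : ℕ, (cseq q j * ((a:ℝ)^k)^j) * s⁻¹ := tsum_congr heq1
          _ = (∑' j : ℕ, cseq q j * ((a:ℝ)^k)^j) * s⁻¹ := tsum_mul_right
          _ = 0 := by rw [hsum0 k, zero_mul]
  · -- Part 3 : the discrete Stieltjes companion
    have htpos : 0 < C/P := by positivity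
    have htabs : ∀ j : ℕ, (C/P) * |cseq q j| ≤ p j := by
      intro j
      have h1 := hCle j
      rw [hqpow] at h1
      calc (C/P) * |cseq q j| ≤ (C/P) * (q^(j*(j-1)/2) * P) :=
            mul_le_mul_of_nonneg_left (hcabs j) htpos.le
        _ = C * q^(j*(j-1)/2) := by field_simp
        _ ≤ p j := h1
    refine ⟨fun j => p j + (C/P) * cseq q j, ?_, ?_, ?_, ?_⟩
    · intro j
      have h1 := htabs j
      have h2 : -|cseq q j| ≤ cseq q j := neg_abs_le _
      nlinarith [h1, h2, htpos]
    · have hS1 : Summable p := by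
        have := hent 1 one_pos
        apply this.congr
        intro j
        simp
      have hS2 : Summable (fun j : ℕ => (C/P) * cseq q j) := by
        apply Summable.mul_left
        have := hsummc 1
        apply this.congr
        intro j
        simp
      rw [Summable.tsum_add hS1 hS2, hpsum, tsum_mul_left]
      have h1 : ∑' j : ℕ, cseq q j = 0 := by
        have := hsum0 0
        simpa using this
      rw [h1, mul_zero, add_zero]
    · intro heq
      have h0 := congrFun heq 0
      rw [show cseq q 0 = 1 from rfl, mul_one] at h0
      have : C/P = 0 := by linarith [h0]
      linarith [htpos]
    · intro k
      have hak : (0:ℝ) < a^k := pow_pos ha0 k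
      have hS1 : Summable (fun j : ℕ => a^(k*j) * p j) := by
        apply (hent ((a:ℝ)^k) hak).congr
        intro j
        rw [pow_mul]
        ring
      have hS2 : Summable (fun j : ℕ => (C/P) * (cseq q j * ((a:ℝ)^k)^j)) :=
        (hsummc _).mul_left _
      have hcongr : ∀ j : ℕ, a^(k*j) * (p j + (C/P)*cseq q j)
          = a^(k*j) * p j + (C/P)*(cseq q j * ((a:ℝ)^k)^j) := by
        intro j
        rw [pow_mul]
        ring
      calc ∑' j : ℕ, a^(k*j) * (p j + (C/P)*cseq q j)
          = ∑' j : ℕ, (a^(k*j) * p j + (C/P)*(cseq q j * ((a:ℝ)^k)^j)) := tsum_congr hcongr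
        _ = (∑' j : ℕ, a^(k*j) * p j) + ∑' j : ℕ, (C/P)*(cseq q j * ((a:ℝ)^k)^j) :=
            Summable.tsum_add hS1 hS2
        _ = ∑' j : ℕ, a^(k*j) * p j := by rw [tsum_mul_left, hsum0 k, mul_zero, add_zero]
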